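/- Let κ ∈ [0,1] and N_B ≥ 0 be real, and set G = (1−κ)·N_B + 1 and η = κ/G. Then for every function χ : ℂ → ℂ and every ξ ∈ ℂ: (A_G(L_η χ))(ξ) = χ(√κ·ξ)·exp(−(1−κ)·(N_B + 1/2)·|ξ|²). That is, the thermal loss channel of transmittance κ and environment brightness N_B decomposes as a quantum-limited attenuator of transmittance κ/((1−κ)N_B+1) followed by a quantum-limited amplifier of gain (1−κ)N_B+1, at the level of characteristic-function transformations. -/

import Mathlib

/-- Characteristic-function action of the quantum-limited attenuator of transmittance `η`:
`(L_η χ)(ξ) = χ(√η ξ) · exp(−(1−η)|ξ|²/2)`. -/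
noncomputable def lossCF (η : ℝ) (χ : ℂ → ℂ) : ℂ → ℂ :=
  fun ξ => χ ((Real.sqrt η : ℂ) * ξ) * Complex.exp (-((1 - η) * ‖ξ‖ ^ 2 / 2 : ℝ))

/-- Characteristic-function action of the quantum-limited amplifier of gain `G`:
`(A_G χ)(ξ) = χ(√G ξ) · exp(−(G−1)|ξ|²/2)`. -/
noncomputable def ampCF (G : ℝ) (χ : ℂ → ℂ) : ℂ → ℂ :=
  fun ξ => χ ((Real.sqrt G : ℂ) * ξ) * Complex.exp (-((G - 1) * ‖ξ‖ ^ 2 / 2 : ℝ))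

/-- The thermal loss channel of transmittance `κ` and environment brightness `N_B`
decomposes, at the level of characteristic functions, as the attenuator of transmittance
`η = κ/((1−κ)N_B+1)` followed by the amplifier of gain `G = (1−κ)N_B+1`:
`(A_G (L_η χ))(ξ) = χ(√κ ξ) · exp(−(1−κ)(N_B+1/2)|ξ|²)`. -/
theorem stmt_9 (κ NB : ℝ) (hκ0 : 0 ≤ κ) (hκ1 : κ ≤ 1) (hNB : 0 ≤ NB)
    (G η : ℝ) (hG : G = (1 - κ) * NB + 1) (hη : η = κ / G) :
    ∀ (χ : ℂ → ℂ) (ξ : ℂ),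
      ampCF G (lossCF η χ) ξ
        = χ ((Real.sqrt κ : ℂ) * ξ) *
            Complex.exp (-((1 - κ) * (NB + 1 / 2) * ‖ξ‖ ^ 2 : ℝ)) := by
  intro χ ξ
  have hG0 : 0 < G := by nlinarith
  have hηG : η * G = κ := by rw [hη, div_mul_cancel₀ κ hG0.ne']
  have hη0 : 0 ≤ η := by
    rw [hη]; positivity
  simp only [ampCF, lossCF]
  have habs : ‖(Real.sqrt G : ℂ) * ξ‖ ^ 2 = G * ‖ξ‖ ^ 2 := by
    rw [norm_mul, mul_pow, Complex.norm_real, Real.norm_of_nonneg (Real.sqrt_nonneg G),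
      Real.sq_sqrt hG0.le]
  have harg : (Real.sqrt η : ℂ) * ((Real.sqrt G : ℂ) * ξ) = (Real.sqrt κ : ℂ) * ξ := by
    rw [← mul_assoc, ← Complex.ofReal_mul, ← Real.sqrt_mul hη0 G, hηG]
  rw [harg, habs, mul_assoc, ← Complex.exp_add]
  congr 1
  have hreal : -((1 - η) * (G * ‖ξ‖ ^ 2) / 2) + -((G - 1) * ‖ξ‖ ^ 2 / 2)
      = -((1 - κ) * (NB + 1 / 2) * ‖ξ‖ ^ 2) := by
    have := hηG
    nlinarith [sq_nonneg ‖ξ‖]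
  have hc := congrArg (Complex.ofReal) hreal
  push_cast at hc ⊢
  rw [hc]
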